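/- With the notation of the previous statement (assuming $\mu \in \mathcal{M}^{(d)}$, i.e., $\sum_{i=1}^j \mu_i \geq \mu_\Sigma \binom{j}{d}/\binom{n}{d}$ for $d \leq j \leq n-1$), for every $j$ with $2 \leq j \leq n-1$ one has $\sum_{i=j}^n \alpha_i \leq -\min\{\mu_1, \epsilon/\binom{n}{d}\}$. -/

import Mathlib

lemma aux_subset_sum (n : ℕ) (μ : ℕ → ℝ)
    (hμsorted : ∀ i j, 1 ≤ i → i ≤ j → j ≤ n → μ i ≤ μ j)
    (S : Finset ℕ) (hS : S ⊆ Finset.Icc 1 n) :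
    ∑ i ∈ Finset.Icc 1 S.card, μ i ≤ ∑ s ∈ S, μ s := by
  set m := S.card with hm
  let e := S.orderEmbOfFin hm.symm
  have hmem : ∀ i : Fin m, e i ∈ S := fun i => S.orderEmbOfFin_mem hm.symm i
  have key : ∀ k : ℕ, ∀ hk : k < m, k + 1 ≤ e ⟨k, hk⟩ := by
    intro k
    induction k with
    | zero => intro hk
              have := hS (hmem ⟨0, hk⟩)
              simp only [Finset.mem_Icc] at this
              exact this.1
    | succ k ih =>
      intro hk
      have hk' : k < m := Nat.lt_of_succ_lt hk
      have h1 : e ⟨k, hk'⟩ < e ⟨k+1, hk⟩ := by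
        apply (S.orderEmbOfFin hm.symm).strictMono
        exact Fin.mk_lt_mk.mpr (Nat.lt_succ_self k)
      have := ih hk'
      omega
  have hSimg : S = Finset.image (fun i => e i) Finset.univ := by
    ext x
    simp only [Finset.mem_image, Finset.mem_univ, true_and]
    constructor
    · intro hx
      have hx' : x ∈ Set.range e := by
        rw [Finset.range_orderEmbOfFin]
        exact hx
      obtain ⟨i, hi⟩ := hx'
      exact ⟨i, hi⟩
    · rintro ⟨i, rfl⟩
      exact hmem i
  have hsum1 : ∑ s ∈ S, μ s = ∑ i : Fin m, μ (e i) := by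
    conv_lhs => rw [hSimg]
    rw [Finset.sum_image (fun a _ b _ h => (S.orderEmbOfFin hm.symm).injective h)]
  have hsum2 : ∑ i ∈ Finset.Icc 1 m, μ i = ∑ i : Fin m, μ (i + 1) := by
    rw [Fin.sum_univ_eq_sum_range (fun i => μ (i+1))]
    apply Finset.sum_nbij' (fun k => k - 1) (fun k => k + 1) <;>
      simp +contextual [Finset.mem_Icc, Finset.mem_range] <;> omega
  rw [hsum1, hsum2]
  apply Finset.sum_le_sum
  intro i _
  have h1 : (i : ℕ) + 1 ≤ e i := key i i.2
  have h2 : e i ≤ n := (Finset.mem_Icc.mp (hS (hmem i))).2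
  exact hμsorted (i+1) (e i) (by omega) h1 h2

lemma aux_hockey (j n d : ℕ) (hj : j ≤ n) (hd : 1 ≤ d) :
    ∑ i ∈ Finset.Icc j n, ((n - i).choose (d-1)) = (n - j + 1).choose d := by
  have h1 : ∑ i ∈ Finset.Icc j n, ((n - i).choose (d-1))
      = ∑ k ∈ Finset.Icc 0 (n - j), (k.choose (d-1)) := by
    apply Finset.sum_nbij' (fun i => n - i) (fun k => n - k) <;>
      simp +contextual [Finset.mem_Icc] <;> omega
  rw [h1]
  have h2 : ∑ k ∈ Finset.Icc 0 (n - j), (k.choose (d-1))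
      = ∑ k ∈ Finset.Icc (d-1) (n - j), (k.choose (d-1)) := by
    symm
    apply Finset.sum_subset
    · intro x hx; simp only [Finset.mem_Icc] at *; omega
    · intro x hx hx'
      simp only [Finset.mem_Icc] at *
      exact Nat.choose_eq_zero_of_lt (by omega)
  rw [h2, Nat.sum_Icc_choose]
  congr 1
  omega

theorem stmt_5 (n d : ℕ) (hd : 1 ≤ d) (hdn : d ≤ n)
    (μ : ℕ → ℝ) (hμpos : ∀ i, 1 ≤ i → i ≤ n → 0 < μ i)
    (hμsorted : ∀ i j, 1 ≤ i → i ≤ j → j ≤ n → μ i ≤ μ j)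
    (muSum : ℝ) (hmuSum : muSum = ∑ i ∈ Finset.Icc 1 n, μ i)
    (hM : ∀ j, d ≤ j → j ≤ n - 1 →
      ∑ i ∈ Finset.Icc 1 j, μ i ≥ muSum * (Nat.choose j d : ℝ) / (Nat.choose n d : ℝ))
    (ε : ℝ) (hε : 0 < ε) (hεμ : ε < muSum)
    (lam : ℝ) (hlam : lam = muSum - ε)
    (φ : ℕ → ℕ) (hφ : Set.BijOn φ (Set.Icc 1 n) (Set.Icc 1 n))
    (α : ℕ → ℝ)
    (hα : ∀ i, 1 ≤ i → i ≤ n →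
      α i = if i ≤ n - d + 1 then
          lam * (Nat.choose (n - i) (d - 1) : ℝ) / (Nat.choose n d : ℝ) - μ (φ i)
        else -μ (φ i)) :
    ∀ j, 2 ≤ j → j ≤ n - 1 →
      ∑ i ∈ Finset.Icc j n, α i ≤ -min (μ 1) (ε / (Nat.choose n d : ℝ)) := by
  intro j hj2 hjn1
  have hn3 : 3 ≤ n := by omega
  have hjn : j ≤ n := by omega
  have hC : (0:ℝ) < (n.choose d : ℝ) := by
    exact_mod_cast Nat.choose_pos hdn
  set m := n - j + 1 with hmdef
  have hαu : ∀ i ∈ Finset.Icc j n,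
      α i = lam * ((n - i).choose (d-1) : ℝ) / (n.choose d : ℝ) - μ (φ i) := by
    intro i hi
    simp only [Finset.mem_Icc] at hi
    rw [hα i (by omega) hi.2]
    by_cases h : i ≤ n - d + 1
    · rw [if_pos h]
    · rw [if_neg h]
      have : (n - i).choose (d-1) = 0 := Nat.choose_eq_zero_of_lt (by omega)
      rw [this]
      push_cast
      ring
  have hsplit : ∑ i ∈ Finset.Icc j n, α i
      = lam * (m.choose d : ℝ) / (n.choose d : ℝ) - ∑ i ∈ Finset.Icc j n, μ (φ i) := by
    rw [Finset.sum_congr rfl hαu, Finset.sum_sub_distrib]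
    congr 1
    rw [← Finset.sum_div, ← Finset.mul_sum]
    congr 2
    rw [← Nat.cast_sum]
    exact_mod_cast congrArg (Nat.cast (R := ℝ)) (aux_hockey j n d hjn hd)
  have himg : ∑ i ∈ Finset.Icc j n, μ (φ i) = ∑ s ∈ (Finset.Icc j n).image φ, μ s := by
    rw [Finset.sum_image]
    intro x hx y hy hxy
    simp only [Finset.mem_Icc, Finset.coe_Icc, Set.mem_Icc] at hx hy
    exact hφ.injOn (Set.mem_Icc.mpr ⟨by omega, hx.2⟩) (Set.mem_Icc.mpr ⟨by omega, hy.2⟩) hxy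
  have hsub : (Finset.Icc j n).image φ ⊆ Finset.Icc 1 n := by
    intro s hs
    simp only [Finset.mem_image, Finset.mem_Icc] at hs ⊢
    obtain ⟨x, hx, rfl⟩ := hs
    exact Set.mem_Icc.mp (hφ.mapsTo (Set.mem_Icc.mpr ⟨by omega, hx.2⟩))
  have hcard : ((Finset.Icc j n).image φ).card = m := by
    rw [Finset.card_image_of_injOn, Nat.card_Icc]
    · omega
    · intro x hx y hy hxy
      simp only [Finset.coe_Icc, Set.mem_Icc] at hx hy
      exact hφ.injOn (Set.mem_Icc.mpr ⟨by omega, hx.2⟩) (Set.mem_Icc.mpr ⟨by omega, hy.2⟩) hxy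
  have hperm : ∑ i ∈ Finset.Icc 1 m, μ i ≤ ∑ i ∈ Finset.Icc j n, μ (φ i) := by
    rw [himg, ← hcard]
    exact aux_subset_sum n μ hμsorted _ hsub
  have hmn : m ≤ n - 1 := by omega
  by_cases hdm : d ≤ m
  · have hMm := hM m hdm hmn
    have hCm : (1:ℝ) ≤ (m.choose d : ℝ) := by
      exact_mod_cast Nat.succ_le_of_lt (Nat.choose_pos hdm)
    have key : ∑ i ∈ Finset.Icc j n, α i ≤ -(ε * (m.choose d : ℝ) / (n.choose d : ℝ)) := by
      rw [hsplit, hlam]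
      have h3 : muSum * (m.choose d : ℝ) / (n.choose d : ℝ)
          ≤ ∑ i ∈ Finset.Icc j n, μ (φ i) := le_trans hMm hperm
      have h4 : (muSum - ε) * (m.choose d : ℝ) / (n.choose d : ℝ)
          = muSum * (m.choose d : ℝ) / (n.choose d : ℝ)
            - ε * (m.choose d : ℝ) / (n.choose d : ℝ) := by ring
      linarith
    refine key.trans ?_
    have h1 : ε / (n.choose d : ℝ) ≤ ε * (m.choose d : ℝ) / (n.choose d : ℝ) := by
      calc ε / (n.choose d : ℝ) = ε * 1 / (n.choose d : ℝ) := by ring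
        _ ≤ ε * (m.choose d : ℝ) / (n.choose d : ℝ) := by gcongr
    have h2 : min (μ 1) (ε / (n.choose d : ℝ)) ≤ ε / (n.choose d : ℝ) := min_le_right _ _
    linarith
  · have hCm : (m.choose d) = 0 := Nat.choose_eq_zero_of_lt (by omega)
    have hT : μ 1 ≤ ∑ i ∈ Finset.Icc 1 m, μ i := by
      apply Finset.single_le_sum (f := μ)
      · intro i hi
        simp only [Finset.mem_Icc] at hi
        exact (hμpos i hi.1 (by omega)).le
      · simp only [Finset.mem_Icc]; omega
    have h2 : min (μ 1) (ε / (n.choose d : ℝ)) ≤ μ 1 := min_le_left _ _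
    rw [hsplit, hCm]
    push_cast
    rw [mul_zero, zero_div, zero_sub]
    linarith
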